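/- arXiv:2512.05766 — 2 statements merged into one kernel-verified Lean document; each statement's English description precedes it below -/
import Mathlib

section
/- Let N ≥ 3 be an integer and λ > 0 a real number. Set β := (-(N-2) + √((N-2)² + 4λ))/2 and μ := √((N-2)² + 4λ)·(2 + √((N-2)² + 4λ))/(N(N-2)), and define R(ρ) := ρ^β (1 + ρ²)^{1 - N/2 - β} for ρ > 0. Then R is twice differentiable on (0, ∞) and satisfies the radial linearized equation: for every ρ > 0, R''(ρ) + ((N-1)/ρ)·R'(ρ) + (−λ/ρ² + μ·N(N−2)·(1+ρ²)^{−2})·R(ρ) = 0; equivalently, (ρ^{N-1}R')' + ρ^{N-1}(−λρ^{−2} + μ·N(N−2)(1+ρ²)^{−2})R = 0 on (0, ∞). -/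
noncomputable section StmtAux

/-- auxiliary: the radial profile. -/
def auxF0 (Nr β : ℝ) (x : ℝ) : ℝ := x ^ β * (1 + x ^ 2) ^ (1 - Nr / 2 - β)

/-- auxiliary: its first derivative on `(0,∞)`. -/
def auxF1 (Nr β : ℝ) (x : ℝ) : ℝ :=
  β * x ^ (β - 1) * (1 + x ^ 2) ^ (1 - Nr / 2 - β)
    + x ^ β * ((2 * x) * (1 - Nr / 2 - β) * (1 + x ^ 2) ^ (1 - Nr / 2 - β - 1))

/-- auxiliary: its second derivative on `(0,∞)`. -/
def auxF2 (Nr β : ℝ) (x : ℝ) : ℝ :=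
  (β * ((β - 1) * x ^ (β - 1 - 1))) * (1 + x ^ 2) ^ (1 - Nr / 2 - β)
    + (β * x ^ (β - 1)) * ((2 * x) * (1 - Nr / 2 - β) * (1 + x ^ 2) ^ (1 - Nr / 2 - β - 1))
    + (β * x ^ (β - 1)) * ((2 * x) * (1 - Nr / 2 - β) * (1 + x ^ 2) ^ (1 - Nr / 2 - β - 1))
    + x ^ β * ((2 * (1 - Nr / 2 - β)) * (1 + x ^ 2) ^ (1 - Nr / 2 - β - 1)
        + (2 * x) * ((2 * x) * (1 - Nr / 2 - β - 1) * (1 - Nr / 2 - β)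
            * (1 + x ^ 2) ^ (1 - Nr / 2 - β - 1 - 1)))

lemma aux_hu (x : ℝ) : HasDerivAt (fun y : ℝ => 1 + y ^ 2) (2 * x) x := by
  simpa using ((hasDerivAt_pow 2 x).const_add 1)

lemma aux_hd0 (Nr β : ℝ) {x : ℝ} (hx : 0 < x) :
    HasDerivAt (auxF0 Nr β) (auxF1 Nr β x) x := by
  have hupos : (0 : ℝ) < 1 + x ^ 2 := by positivity
  have h1 : HasDerivAt (fun y : ℝ => y ^ β) (β * x ^ (β - 1)) x :=
    Real.hasDerivAt_rpow_const (Or.inl hx.ne')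
  have h2 : HasDerivAt (fun y : ℝ => (1 + y ^ 2) ^ (1 - Nr / 2 - β))
      ((2 * x) * (1 - Nr / 2 - β) * (1 + x ^ 2) ^ (1 - Nr / 2 - β - 1)) x :=
    (aux_hu x).rpow_const (Or.inl hupos.ne')
  exact h1.mul h2

lemma aux_hd1 (Nr β : ℝ) {x : ℝ} (hx : 0 < x) :
    HasDerivAt (auxF1 Nr β) (auxF2 Nr β x) x := by
  have hupos : (0 : ℝ) < 1 + x ^ 2 := by positivity
  have hA : HasDerivAt (fun y : ℝ => y ^ (β - 1)) ((β - 1) * x ^ (β - 1 - 1)) x :=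
    Real.hasDerivAt_rpow_const (Or.inl hx.ne')
  have h1 : HasDerivAt (fun y : ℝ => y ^ β) (β * x ^ (β - 1)) x :=
    Real.hasDerivAt_rpow_const (Or.inl hx.ne')
  have h2 : HasDerivAt (fun y : ℝ => (1 + y ^ 2) ^ (1 - Nr / 2 - β))
      ((2 * x) * (1 - Nr / 2 - β) * (1 + x ^ 2) ^ (1 - Nr / 2 - β - 1)) x :=
    (aux_hu x).rpow_const (Or.inl hupos.ne')
  have h3 : HasDerivAt (fun y : ℝ => (1 + y ^ 2) ^ (1 - Nr / 2 - β - 1))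
      ((2 * x) * (1 - Nr / 2 - β - 1) * (1 + x ^ 2) ^ (1 - Nr / 2 - β - 1 - 1)) x :=
    (aux_hu x).rpow_const (Or.inl hupos.ne')
  have h4 : HasDerivAt
      (fun y : ℝ => (2 * y) * (1 - Nr / 2 - β) * (1 + y ^ 2) ^ (1 - Nr / 2 - β - 1))
      ((2 * (1 - Nr / 2 - β)) * (1 + x ^ 2) ^ (1 - Nr / 2 - β - 1)
        + (2 * x) * ((2 * x) * (1 - Nr / 2 - β - 1) * (1 - Nr / 2 - β)
            * (1 + x ^ 2) ^ (1 - Nr / 2 - β - 1 - 1))) x := by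
    have h5 : HasDerivAt (fun y : ℝ => (2 * y) * (1 - Nr / 2 - β)) (2 * (1 - Nr / 2 - β)) x := by
      simpa using ((hasDerivAt_id x).const_mul 2).mul_const (1 - Nr / 2 - β)
    have := h5.fun_mul h3
    refine this.congr_deriv ?_
    ring
  have hT1 : HasDerivAt (fun y : ℝ => β * y ^ (β - 1) * (1 + y ^ 2) ^ (1 - Nr / 2 - β))
      ((β * ((β - 1) * x ^ (β - 1 - 1))) * (1 + x ^ 2) ^ (1 - Nr / 2 - β)
        + (β * x ^ (β - 1)) * ((2 * x) * (1 - Nr / 2 - β) * (1 + x ^ 2) ^ (1 - Nr / 2 - β - 1))) x :=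
    (hA.const_mul β).mul h2
  have hT2 := h1.fun_mul h4
  have := hT1.fun_add hT2
  unfold auxF1 auxF2
  refine this.congr_deriv ?_
  ring

lemma aux_alg (Nr β lam m : ℝ) {x : ℝ} (hx : 0 < x)
    (hlam : lam = β * (β + Nr - 2)) (hm : m = (2 * β + Nr - 2) * (2 * β + Nr)) :
    auxF2 Nr β x + ((Nr - 1) / x) * auxF1 Nr β x
      + (-lam / x ^ 2 + m * ((1 + x ^ 2) ^ 2)⁻¹) * auxF0 Nr β x = 0 := by
  have hupos : (0 : ℝ) < 1 + x ^ 2 := by positivity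
  have ha : (0 : ℝ) < x ^ β := Real.rpow_pos_of_pos hx β
  have hb : (0 : ℝ) < (1 + x ^ 2) ^ (1 - Nr / 2 - β) := Real.rpow_pos_of_pos hupos _
  have e1 : x ^ (β - 1) = x ^ β / x := by
    rw [Real.rpow_sub hx, Real.rpow_one]
  have e2 : x ^ (β - 1 - 1) = x ^ β / x / x := by
    rw [Real.rpow_sub hx, Real.rpow_sub hx, Real.rpow_one]
  have e3 : (1 + x ^ 2) ^ (1 - Nr / 2 - β - 1)
      = (1 + x ^ 2) ^ (1 - Nr / 2 - β) / (1 + x ^ 2) := by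
    rw [Real.rpow_sub hupos, Real.rpow_one]
  have e4 : (1 + x ^ 2) ^ (1 - Nr / 2 - β - 1 - 1)
      = (1 + x ^ 2) ^ (1 - Nr / 2 - β) / (1 + x ^ 2) / (1 + x ^ 2) := by
    rw [Real.rpow_sub hupos, Real.rpow_sub hupos, Real.rpow_one]
  unfold auxF0 auxF1 auxF2
  rw [e2, e1, e3, e4, hlam, hm]
  set a := x ^ β with hadef
  set b := (1 + x ^ 2) ^ (1 - Nr / 2 - β) with hbdef
  field_simp
  ring

end StmtAux

/-- The radial function `R(ρ) = ρ^β (1+ρ²)^{1-N/2-β}`, with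
`β = (-(N-2) + √((N-2)²+4λ))/2` and
`μ = √((N-2)²+4λ)(2+√((N-2)²+4λ))/(N(N-2))`, is twice differentiable on `(0,∞)` and
solves the radial linearized equation
`R'' + ((N-1)/ρ) R' + (-λ/ρ² + μ N(N-2)(1+ρ²)^{-2}) R = 0`; equivalently
`(ρ^{N-1} R')' + ρ^{N-1}(-λ ρ^{-2} + μ N(N-2)(1+ρ²)^{-2}) R = 0` on `(0,∞)`. -/
theorem stmt_10 (N : ℕ) (hN : 3 ≤ N) (lam : ℝ) (hlam : 0 < lam)
    (β μ : ℝ)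
    (hβ : β = (-((N : ℝ) - 2) + Real.sqrt (((N : ℝ) - 2) ^ 2 + 4 * lam)) / 2)
    (hμ : μ = Real.sqrt (((N : ℝ) - 2) ^ 2 + 4 * lam)
        * (2 + Real.sqrt (((N : ℝ) - 2) ^ 2 + 4 * lam)) / ((N : ℝ) * ((N : ℝ) - 2)))
    (R : ℝ → ℝ)
    (hR : ∀ ρ : ℝ, 0 < ρ → R ρ = ρ ^ β * (1 + ρ ^ 2) ^ (1 - (N : ℝ) / 2 - β)) :
    ContDiffOn ℝ 2 R (Set.Ioi 0) ∧
      (∀ ρ : ℝ, 0 < ρ →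
        deriv (deriv R) ρ + (((N : ℝ) - 1) / ρ) * deriv R ρ
          + (-lam / ρ ^ 2 + μ * (N : ℝ) * ((N : ℝ) - 2) * ((1 + ρ ^ 2) ^ 2)⁻¹) * R ρ = 0) ∧
      (∀ ρ : ℝ, 0 < ρ →
        deriv (fun t : ℝ => t ^ ((N : ℝ) - 1) * deriv R t) ρ
          + ρ ^ ((N : ℝ) - 1)
            * (-lam / ρ ^ 2 + μ * (N : ℝ) * ((N : ℝ) - 2) * ((1 + ρ ^ 2) ^ 2)⁻¹) * R ρ = 0) := by
  have hN3 : (3 : ℝ) ≤ (N : ℝ) := by exact_mod_cast hN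
  have hN2 : (0 : ℝ) < (N : ℝ) - 2 := by linarith
  have hNpos : (0 : ℝ) < (N : ℝ) := by linarith
  have hsq : Real.sqrt (((N : ℝ) - 2) ^ 2 + 4 * lam) ^ 2 = ((N : ℝ) - 2) ^ 2 + 4 * lam :=
    Real.sq_sqrt (by positivity)
  have h2β : 2 * β + ((N : ℝ) - 2) = Real.sqrt (((N : ℝ) - 2) ^ 2 + 4 * lam) := by
    rw [hβ]; ring
  rw [← h2β] at hsq
  have hlam' : lam = β * (β + (N : ℝ) - 2) := by nlinarith [hsq]
  have hm' : μ * (N : ℝ) * ((N : ℝ) - 2) = (2 * β + (N : ℝ) - 2) * (2 * β + (N : ℝ)) := by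
    rw [hμ, ← h2β]
    field_simp
    ring
  -- R agrees with auxF0 on Ioi 0
  have hRf : Set.EqOn R (auxF0 (N : ℝ) β) (Set.Ioi 0) := by
    intro x hx
    rw [hR x hx]; rfl
  have hdR : ∀ x : ℝ, 0 < x → deriv R x = auxF1 (N : ℝ) β x := by
    intro x hx
    have hev : R =ᶠ[nhds x] auxF0 (N : ℝ) β :=
      Filter.eventuallyEq_of_mem (isOpen_Ioi.mem_nhds hx) hRf
    rw [hev.deriv_eq, (aux_hd0 (N : ℝ) β hx).deriv]
  have hevd : ∀ x : ℝ, 0 < x → deriv R =ᶠ[nhds x] auxF1 (N : ℝ) β := by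
    intro x hx
    exact Filter.eventuallyEq_of_mem (isOpen_Ioi.mem_nhds hx)
      (fun y hy => hdR y hy)
  have hddR : ∀ x : ℝ, 0 < x → deriv (deriv R) x = auxF2 (N : ℝ) β x := by
    intro x hx
    rw [(hevd x hx).deriv_eq, (aux_hd1 (N : ℝ) β hx).deriv]
  -- the main pointwise identity
  have Hmain : ∀ x : ℝ, 0 < x →
      auxF2 (N : ℝ) β x + (((N : ℝ) - 1) / x) * auxF1 (N : ℝ) β x
        + (-lam / x ^ 2 + μ * (N : ℝ) * ((N : ℝ) - 2) * ((1 + x ^ 2) ^ 2)⁻¹)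
            * auxF0 (N : ℝ) β x = 0 := by
    intro x hx
    exact aux_alg (N : ℝ) β lam (μ * (N : ℝ) * ((N : ℝ) - 2)) hx (by linarith [hlam']) hm'
  refine ⟨?_, ?_, ?_⟩
  · -- smoothness
    intro x hx
    have hxpos : (0 : ℝ) < x := hx
    have hupos : (0 : ℝ) < 1 + x ^ 2 := by positivity
    have h1 : ContDiffAt ℝ 2 (fun y : ℝ => y ^ β) x :=
      Real.contDiffAt_rpow_const_of_ne hxpos.ne'
    have hu : ContDiffAt ℝ 2 (fun y : ℝ => 1 + y ^ 2) x := by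
      exact (contDiff_const.add (contDiff_id.pow 2)).contDiffAt
    have h2 : ContDiffAt ℝ 2 (fun y : ℝ => (1 + y ^ 2) ^ (1 - (N : ℝ) / 2 - β)) x :=
      hu.rpow_const_of_ne hupos.ne'
    exact ((h1.mul h2).contDiffWithinAt).congr (fun y hy => hRf hy) (hRf hx)
  · -- the radial ODE
    intro ρ hρ
    rw [hddR ρ hρ, hdR ρ hρ, hR ρ hρ]
    exact Hmain ρ hρ
  · -- the divergence form
    intro ρ hρ
    have hD : HasDerivAt (deriv R) (auxF2 (N : ℝ) β ρ) ρ :=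
      (aux_hd1 (N : ℝ) β hρ).congr_of_eventuallyEq (hevd ρ hρ)
    have hP : HasDerivAt (fun t : ℝ => t ^ ((N : ℝ) - 1))
        (((N : ℝ) - 1) * ρ ^ ((N : ℝ) - 1 - 1)) ρ :=
      Real.hasDerivAt_rpow_const (Or.inl hρ.ne')
    have hM := hP.fun_mul hD
    rw [hM.deriv, hdR ρ hρ, hR ρ hρ]
    have e : ρ ^ ((N : ℝ) - 1 - 1) = ρ ^ ((N : ℝ) - 1) / ρ := by
      rw [Real.rpow_sub hρ, Real.rpow_one]
    rw [e]
    have H := Hmain ρ hρ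
    simp only [auxF0] at H
    have hρne : ρ ≠ 0 := hρ.ne'
    linear_combination (ρ ^ ((N : ℝ) - 1)) * H
end

section
/- Let α ∈ (0, 2) with α ≠ 1. Then for every r ∈ (0, π/2) one has min{1, sin(απ/2)/α} < sin(αr)/(α·sin r) < max{1, sin(απ/2)/α}. -/
open Real

private lemma hasDerivAt_sin_const_mul (α x : ℝ) :
    HasDerivAt (fun x => Real.sin (α * x)) (α * Real.cos (α * x)) x := by
  have := (Real.hasDerivAt_sin (α * x)).comp x ((hasDerivAt_id x).const_mul α)
  exact this.congr_deriv (by ring)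

private lemma hasDerivAt_cos_const_mul (α x : ℝ) :
    HasDerivAt (fun x => Real.cos (α * x)) (-(α * Real.sin (α * x))) x := by
  have := (Real.hasDerivAt_cos (α * x)).comp x ((hasDerivAt_id x).const_mul α)
  refine this.congr_deriv ?_
  ring

/-- derivative of ψ(x) = α cos(αx) sin x − sin(αx) cos x -/
private lemma hasDerivAt_psi (α x : ℝ) :
    HasDerivAt (fun x => α * Real.cos (α * x) * Real.sin x - Real.sin (α * x) * Real.cos x)
      ((1 - α ^ 2) * (Real.sin (α * x) * Real.sin x)) x := by
  have h1 : HasDerivAt (fun x => α * Real.cos (α * x)) (α * -(α * Real.sin (α * x))) x :=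
    (hasDerivAt_cos_const_mul α x).const_mul α
  have h2 := h1.mul (Real.hasDerivAt_sin x)
  have h3 := (hasDerivAt_sin_const_mul α x).mul (Real.hasDerivAt_cos x)
  have h4 := h2.sub h3
  refine h4.congr_deriv ?_
  ring

private lemma sin_amul_pos {α x : ℝ} (hα0 : 0 < α) (hα2 : α < 2)
    (hx0 : 0 < x) (hx : x ≤ π / 2) : 0 < Real.sin (α * x) := by
  apply Real.sin_pos_of_pos_of_lt_pi (by positivity)
  have hπ : 0 < π := Real.pi_pos
  nlinarith

/-- ψ is positive on (0, π/2] when α < 1. -/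
private lemma psi_pos {α : ℝ} (hα0 : 0 < α) (hα1 : α < 1) {x : ℝ}
    (hx0 : 0 < x) (hx : x ≤ π / 2) :
    0 < α * Real.cos (α * x) * Real.sin x - Real.sin (α * x) * Real.cos x := by
  set ψ : ℝ → ℝ := fun x => α * Real.cos (α * x) * Real.sin x - Real.sin (α * x) * Real.cos x
    with hψ
  have hmono : StrictMonoOn ψ (Set.Icc 0 (π / 2)) := by
    apply strictMonoOn_of_deriv_pos (convex_Icc _ _)
    · exact Continuous.continuousOn (by fun_prop)
    · intro y hy
      rw [interior_Icc] at hy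
      obtain ⟨hy1, hy2⟩ := hy
      rw [(hasDerivAt_psi α y).deriv]
      have h1 : 0 < Real.sin (α * y) :=
        sin_amul_pos hα0 (by linarith) hy1 hy2.le
      have h2 : 0 < Real.sin y :=
        Real.sin_pos_of_pos_of_lt_pi hy1 (by nlinarith [Real.pi_pos])
      exact mul_pos (by nlinarith) (mul_pos h1 h2)
  have h0 : ψ 0 = 0 := by simp [hψ]
  have := hmono (Set.mem_Icc.mpr ⟨le_refl 0, by positivity⟩)
    (Set.mem_Icc.mpr ⟨hx0.le, hx⟩) hx0
  rwa [h0] at this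

/-- ψ is negative on (0, π/2] when 1 < α < 2. -/
private lemma psi_neg {α : ℝ} (hα1 : 1 < α) (hα2 : α < 2) {x : ℝ}
    (hx0 : 0 < x) (hx : x ≤ π / 2) :
    α * Real.cos (α * x) * Real.sin x - Real.sin (α * x) * Real.cos x < 0 := by
  set ψ : ℝ → ℝ := fun x => α * Real.cos (α * x) * Real.sin x - Real.sin (α * x) * Real.cos x
    with hψ
  have hα0 : 0 < α := by linarith
  have hmono : StrictAntiOn ψ (Set.Icc 0 (π / 2)) := by
    apply strictAntiOn_of_deriv_neg (convex_Icc _ _)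
    · exact Continuous.continuousOn (by fun_prop)
    · intro y hy
      rw [interior_Icc] at hy
      obtain ⟨hy1, hy2⟩ := hy
      rw [(hasDerivAt_psi α y).deriv]
      have h1 : 0 < Real.sin (α * y) := sin_amul_pos hα0 hα2 hy1 hy2.le
      have h2 : 0 < Real.sin y :=
        Real.sin_pos_of_pos_of_lt_pi hy1 (by nlinarith [Real.pi_pos])
      exact mul_neg_of_neg_of_pos (by nlinarith) (mul_pos h1 h2)
  have h0 : ψ 0 = 0 := by simp [hψ]
  have := hmono (Set.mem_Icc.mpr ⟨le_refl 0, by positivity⟩)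
    (Set.mem_Icc.mpr ⟨hx0.le, hx⟩) hx0
  rwa [h0] at this

/-- For 0 < α < 1 and 0 < r < π/2 : α sin r < sin (αr). -/
private lemma lower_lt {α : ℝ} (hα0 : 0 < α) (hα1 : α < 1) {r : ℝ}
    (hr0 : 0 < r) (hr : r < π / 2) : α * Real.sin r < Real.sin (α * r) := by
  set u : ℝ → ℝ := fun x => Real.sin (α * x) - α * Real.sin x with hu
  have hder : ∀ x, HasDerivAt u (α * Real.cos (α * x) - α * Real.cos x) x := fun x =>
    (hasDerivAt_sin_const_mul α x).sub ((Real.hasDerivAt_sin x).const_mul α)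
  have hmono : StrictMonoOn u (Set.Icc 0 (π / 2)) := by
    apply strictMonoOn_of_deriv_pos (convex_Icc _ _)
    · exact Continuous.continuousOn (by fun_prop)
    · intro y hy
      rw [interior_Icc] at hy
      obtain ⟨hy1, hy2⟩ := hy
      rw [(hder y).deriv]
      have : Real.cos y < Real.cos (α * y) := by
        apply Real.cos_lt_cos_of_nonneg_of_le_pi (by positivity) _ (by nlinarith)
        nlinarith [Real.pi_pos]
      nlinarith
  have h0 : u 0 = 0 := by simp [hu]
  have := hmono (Set.mem_Icc.mpr ⟨le_refl 0, by positivity⟩)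
    (Set.mem_Icc.mpr ⟨hr0.le, hr.le⟩) hr0
  rw [h0] at this
  simpa [hu] using this

/-- For 1 < α < 2 and 0 < r < π/2 : sin (αr) < α sin r. -/
private lemma upper_lt {α : ℝ} (hα1 : 1 < α) (hα2 : α < 2) {r : ℝ}
    (hr0 : 0 < r) (hr : r < π / 2) : Real.sin (α * r) < α * Real.sin r := by
  set u : ℝ → ℝ := fun x => Real.sin (α * x) - α * Real.sin x with hu
  have hder : ∀ x, HasDerivAt u (α * Real.cos (α * x) - α * Real.cos x) x := fun x =>
    (hasDerivAt_sin_const_mul α x).sub ((Real.hasDerivAt_sin x).const_mul α)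
  have hmono : StrictAntiOn u (Set.Icc 0 (π / 2)) := by
    apply strictAntiOn_of_deriv_neg (convex_Icc _ _)
    · exact Continuous.continuousOn (by fun_prop)
    · intro y hy
      rw [interior_Icc] at hy
      obtain ⟨hy1, hy2⟩ := hy
      rw [(hder y).deriv]
      have : Real.cos (α * y) < Real.cos y := by
        apply Real.cos_lt_cos_of_nonneg_of_le_pi hy1.le (by nlinarith) (by nlinarith)
      nlinarith
  have h0 : u 0 = 0 := by simp [hu]
  have := hmono (Set.mem_Icc.mpr ⟨le_refl 0, by positivity⟩)
    (Set.mem_Icc.mpr ⟨hr0.le, hr.le⟩) hr0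
  rw [h0] at this
  simpa [hu] using this

private lemma ratio_continuousOn (α : ℝ) :
    ContinuousOn (fun x => Real.sin (α * x) / Real.sin x) (Set.Ioc 0 (π / 2)) := by
  apply ContinuousOn.div (Continuous.continuousOn (by fun_prop))
    (Real.continuous_sin.continuousOn)
  intro x hx
  exact (Real.sin_pos_of_pos_of_lt_pi hx.1 (by nlinarith [Real.pi_pos, hx.2])).ne'

private lemma ratio_hasDerivAt (α : ℝ) {x : ℝ} (hx : Real.sin x ≠ 0) :
    HasDerivAt (fun x => Real.sin (α * x) / Real.sin x)
      ((α * Real.cos (α * x) * Real.sin x - Real.sin (α * x) * Real.cos x) / Real.sin x ^ 2)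
      x :=
  (hasDerivAt_sin_const_mul α x).div (Real.hasDerivAt_sin x) hx

/-- For 0 < α < 1 and 0 < r < π/2 : sin(αr)/sin r < sin(απ/2). -/
private lemma ratio_lt {α : ℝ} (hα0 : 0 < α) (hα1 : α < 1) {r : ℝ}
    (hr0 : 0 < r) (hr : r < π / 2) :
    Real.sin (α * r) / Real.sin r < Real.sin (α * (π / 2)) := by
  have hπ : 0 < π := Real.pi_pos
  have hmono : StrictMonoOn (fun x => Real.sin (α * x) / Real.sin x)
      (Set.Ioc 0 (π / 2)) := by
    apply strictMonoOn_of_deriv_pos (convex_Ioc _ _) (ratio_continuousOn α)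
    intro y hy
    rw [interior_Ioc] at hy
    obtain ⟨hy1, hy2⟩ := hy
    have hsy : 0 < Real.sin y := Real.sin_pos_of_pos_of_lt_pi hy1 (by nlinarith)
    rw [(ratio_hasDerivAt α hsy.ne').deriv]
    exact div_pos (psi_pos hα0 hα1 hy1 hy2.le) (by positivity)
  have := hmono (Set.mem_Ioc.mpr ⟨hr0, hr.le⟩)
    (Set.mem_Ioc.mpr ⟨by positivity, le_refl _⟩) hr
  simpa [Real.sin_pi_div_two] using this

/-- For 1 < α < 2 and 0 < r < π/2 : sin(απ/2) < sin(αr)/sin r. -/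
private lemma ratio_gt {α : ℝ} (hα1 : 1 < α) (hα2 : α < 2) {r : ℝ}
    (hr0 : 0 < r) (hr : r < π / 2) :
    Real.sin (α * (π / 2)) < Real.sin (α * r) / Real.sin r := by
  have hπ : 0 < π := Real.pi_pos
  have hmono : StrictAntiOn (fun x => Real.sin (α * x) / Real.sin x)
      (Set.Ioc 0 (π / 2)) := by
    apply strictAntiOn_of_deriv_neg (convex_Ioc _ _) (ratio_continuousOn α)
    intro y hy
    rw [interior_Ioc] at hy
    obtain ⟨hy1, hy2⟩ := hy
    have hsy : 0 < Real.sin y := Real.sin_pos_of_pos_of_lt_pi hy1 (by nlinarith)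
    rw [(ratio_hasDerivAt α hsy.ne').deriv]
    exact div_neg_of_neg_of_pos (psi_neg hα1 hα2 hy1 hy2.le) (by positivity)
  have := hmono (Set.mem_Ioc.mpr ⟨hr0, hr.le⟩)
    (Set.mem_Ioc.mpr ⟨by positivity, le_refl _⟩) hr
  simpa [Real.sin_pi_div_two] using this

/-- For `α ∈ (0,2)`, `α ≠ 1`, and `r ∈ (0, π/2)` one has
`min{1, sin(απ/2)/α} < sin(αr)/(α sin r) < max{1, sin(απ/2)/α}`. -/
theorem stmt_13 (α : ℝ) (hα : α ∈ Set.Ioo (0 : ℝ) 2) (hα1 : α ≠ 1) :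
    ∀ r : ℝ, r ∈ Set.Ioo 0 (π / 2) →
      min 1 (Real.sin (α * (π / 2)) / α) < Real.sin (α * r) / (α * Real.sin r) ∧
      Real.sin (α * r) / (α * Real.sin r) < max 1 (Real.sin (α * (π / 2)) / α) := by
  obtain ⟨hα0, hα2⟩ := hα
  rintro r ⟨hr0, hr⟩
  have hπ : 0 < π := Real.pi_pos
  have hsr : 0 < Real.sin r := Real.sin_pos_of_pos_of_lt_pi hr0 (by nlinarith)
  have hden : 0 < α * Real.sin r := by positivity
  rcases lt_or_gt_of_ne hα1 with h1 | h1
  · -- α < 1 : 1 < v < sin(απ/2)/α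
    have hv1 : 1 < Real.sin (α * r) / (α * Real.sin r) :=
      (one_lt_div hden).mpr (lower_lt hα0 h1 hr0 hr)
    have hv2 : Real.sin (α * r) / (α * Real.sin r) < Real.sin (α * (π / 2)) / α := by
      rw [div_lt_div_iff₀ hden hα0]
      have := (div_lt_iff₀ hsr).mp (ratio_lt hα0 h1 hr0 hr)
      nlinarith
    exact ⟨lt_of_le_of_lt (min_le_left _ _) hv1,
      lt_of_lt_of_le hv2 (le_max_right _ _)⟩
  · -- α > 1 : sin(απ/2)/α < v < 1
    have hv1 : Real.sin (α * r) / (α * Real.sin r) < 1 :=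
      (div_lt_one hden).mpr (upper_lt h1 hα2 hr0 hr)
    have hv2 : Real.sin (α * (π / 2)) / α < Real.sin (α * r) / (α * Real.sin r) := by
      rw [div_lt_div_iff₀ hα0 hden]
      have := (lt_div_iff₀ hsr).mp (ratio_gt h1 hα2 hr0 hr)
      nlinarith
    exact ⟨lt_of_le_of_lt (min_le_right _ _) hv2,
      lt_of_lt_of_le hv1 (le_max_left _ _)⟩
end
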